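/- A function f ∈ H²_ω is H²_ω-inner if and only if ‖f‖ = 1 and |p(0)| ≤ ‖p·f‖ for every polynomial p. -/

import Mathlib

noncomputable section
open Complex Filter

namespace WHS

/-- Membership in the weighted Hardy space: the coefficient sequence `a` satisfies
`∑ ω n * |a n|^2 < ∞`. -/
def memH (ω : ℕ → ℝ) (a : ℕ → ℂ) : Prop :=
  Summable fun n => ω n * ‖a n‖ ^ 2

/-- The squared norm `‖f‖²` in the weighted Hardy space. -/
def wNorm2 (ω : ℕ → ℝ) (a : ℕ → ℂ) : ℝ := ∑' n, ω n * ‖a n‖ ^ 2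

/-- The inner product `⟨f, g⟩ = ∑ ω n * a n * conj (b n)` (linear in the first argument). -/
def wInner (ω : ℕ → ℝ) (a b : ℕ → ℂ) : ℂ :=
  ∑' n, (ω n : ℂ) * a n * (starRingEnd ℂ) (b n)

/-- Coefficients of `z^m * f`. -/
def shift (m : ℕ) (a : ℕ → ℂ) : ℕ → ℂ := fun n => if m ≤ n then a (n - m) else 0

/-- Coefficients of `p * f` for a polynomial `p`. -/
def polyMul (p : Polynomial ℂ) (a : ℕ → ℂ) : ℕ → ℂ :=
  fun n => ∑ j ∈ Finset.range (n + 1), p.coeff j * a (n - j)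

/-- Coefficients of the product of power series with coefficients `b` and `a`. -/
def conv (b a : ℕ → ℂ) : ℕ → ℂ :=
  fun n => ∑ j ∈ Finset.range (n + 1), b j * a (n - j)

/-- `f` is an `H²_ω`-inner function: `f ∈ H²_ω`, `‖f‖ = 1` and `⟨z^m f, f⟩ = 0` for all `m ≥ 1`. -/
def IsInner (ω : ℕ → ℝ) (a : ℕ → ℂ) : Prop :=
  memH ω a ∧ wNorm2 ω a = 1 ∧ ∀ m : ℕ, 1 ≤ m → wInner ω (shift m a) a = 0

end WHS

open WHS

section Aux
variable {ω : ℕ → ℝ} (hpos : ∀ n, 0 < ω n)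

/-- a ratio bound -/
lemma aux_ratio (hpos : ∀ n, 0 < ω n)
    (hlim : Tendsto (fun n => ω (n + 1) / ω n) atTop (nhds 1)) :
    ∃ C : ℝ, 1 ≤ C ∧ ∀ n, ω (n + 1) ≤ C * ω n := by
  obtain ⟨C, hC⟩ := hlim.bddAbove_range
  refine ⟨max C 1, le_max_right _ _, fun n => ?_⟩
  have h1 : ω (n + 1) / ω n ≤ C := hC ⟨n, rfl⟩
  have h2 := hpos n
  have := (div_le_iff₀ h2).mp h1
  nlinarith [le_max_left C 1, hpos (n+1)]

lemma aux_pow (hpos : ∀ n, 0 < ω n) {C : ℝ} (hC1 : 1 ≤ C)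
    (hC : ∀ n, ω (n + 1) ≤ C * ω n) (m : ℕ) : ∀ n, ω (n + m) ≤ C ^ m * ω n := by
  induction m with
  | zero => intro n; simp
  | succ m ih =>
    intro n
    have h1 : ω (n + m + 1) ≤ C * ω (n + m) := hC _
    have h2 := ih n
    have hC0 : (0:ℝ) < C := lt_of_lt_of_le one_pos hC1
    calc ω (n + (m+1)) = ω (n + m + 1) := by ring_nf
      _ ≤ C * ω (n + m) := h1
      _ ≤ C * (C ^ m * ω n) := by nlinarith
      _ = C ^ (m+1) * ω n := by ring

lemma memH_shift (hpos : ∀ n, 0 < ω n)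
    (hlim : Tendsto (fun n => ω (n + 1) / ω n) atTop (nhds 1))
    {a : ℕ → ℂ} (ha : memH ω a) (m : ℕ) : memH ω (shift m a) := by
  obtain ⟨C, hC1, hC⟩ := aux_ratio hpos hlim
  rw [memH, ← summable_nat_add_iff m]
  have key : ∀ n, ω (n + m) * ‖shift m a (n + m)‖ ^ 2 ≤ C ^ m * (ω n * ‖a n‖ ^ 2) := by
    intro n
    have : shift m a (n + m) = a n := by simp [shift]
    rw [this]
    have := aux_pow hpos hC1 hC m n
    nlinarith [sq_nonneg ‖a n‖, hpos n]
  exact Summable.of_nonneg_of_le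
    (fun n => mul_nonneg (hpos _).le (sq_nonneg _)) key (ha.mul_left _)

lemma memH_add {a b : ℕ → ℂ} (hpos : ∀ n, 0 < ω n) (ha : memH ω a) (hb : memH ω b) :
    memH ω (fun n => a n + b n) := by
  refine Summable.of_nonneg_of_le (fun n => mul_nonneg (hpos _).le (sq_nonneg _))
    (fun n => ?_) ((ha.add hb).mul_left 2)
  have h1 : ‖a n + b n‖ ≤ ‖a n‖ + ‖b n‖ := norm_add_le _ _
  have h2 : (0:ℝ) ≤ ‖a n + b n‖ := norm_nonneg _
  have h3 : ‖a n + b n‖ ^ 2 ≤ 2 * ‖a n‖ ^ 2 + 2 * ‖b n‖ ^ 2 := by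
    nlinarith [sq_nonneg (‖a n‖ - ‖b n‖), norm_nonneg (a n), norm_nonneg (b n)]
  have h4 := (hpos n).le
  show ω n * ‖a n + b n‖ ^ 2 ≤ 2 * (ω n * ‖a n‖ ^ 2 + ω n * ‖b n‖ ^ 2)
  nlinarith

lemma memH_smul {a : ℕ → ℂ} (hpos : ∀ n, 0 < ω n) (ha : memH ω a) (c : ℂ) :
    memH ω (fun n => c * a n) := by
  have : ∀ n, ω n * ‖c * a n‖ ^ 2 = ‖c‖^2 * (ω n * ‖a n‖ ^ 2) := by
    intro n; rw [norm_mul]; ring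
  exact (ha.mul_left (‖c‖^2)).congr fun n => (this n).symm

lemma memH_finsum {ι : Type*} (hpos : ∀ n, 0 < ω n) (s : Finset ι) (g : ι → ℕ → ℂ) :
    (∀ i ∈ s, memH ω (g i)) → memH ω (fun n => ∑ i ∈ s, g i n) := by
  classical
  induction s using Finset.induction_on with
  | empty => intro _; simpa [memH] using summable_zero
  | @insert x s' hx ih =>
    intro hg
    simp only [Finset.sum_insert hx]
    exact memH_add hpos (hg x (Finset.mem_insert_self _ _))
      (ih fun i hi => hg i (Finset.mem_insert_of_mem hi))

lemma polyMul_rep (p : Polynomial ℂ) (a : ℕ → ℂ) (n : ℕ) :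
    polyMul p a n = ∑ j ∈ Finset.range (p.natDegree + 1), p.coeff j * shift j a n := by
  set N := max n p.natDegree with hN
  have h1 : polyMul p a n = ∑ j ∈ Finset.range (N + 1), p.coeff j * shift j a n := by
    rw [polyMul]
    rw [show (∑ j ∈ Finset.range (n+1), p.coeff j * a (n-j))
        = ∑ j ∈ Finset.range (n+1), p.coeff j * shift j a n from
      Finset.sum_congr rfl fun j hj => by
        rw [Finset.mem_range] at hj
        rw [shift]; simp only [if_pos (by omega : j ≤ n)]]
    apply Finset.sum_subset
    · intro x hx; rw [Finset.mem_range] at *; omega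
    · intro x hx hnx
      rw [Finset.mem_range] at *
      rw [shift]; simp only [if_neg (by omega : ¬ x ≤ n), mul_zero]
  have h2 : (∑ j ∈ Finset.range (p.natDegree + 1), p.coeff j * shift j a n)
      = ∑ j ∈ Finset.range (N + 1), p.coeff j * shift j a n := by
    apply Finset.sum_subset
    · intro x hx; rw [Finset.mem_range] at *; omega
    · intro x hx hnx
      rw [Finset.mem_range] at *
      rw [Polynomial.coeff_eq_zero_of_natDegree_lt (by omega), zero_mul]
  rw [h1, h2]

lemma memH_polyMul (hpos : ∀ n, 0 < ω n)
    (hlim : Tendsto (fun n => ω (n + 1) / ω n) atTop (nhds 1))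
    {a : ℕ → ℂ} (ha : memH ω a) (p : Polynomial ℂ) : memH ω (polyMul p a) := by
  have hrep : polyMul p a = fun n => ∑ j ∈ Finset.range (p.natDegree + 1),
      p.coeff j * shift j a n := funext fun n => polyMul_rep p a n
  rw [hrep]
  exact memH_finsum hpos _ _ fun j _ =>
    memH_smul hpos (memH_shift hpos hlim ha j) _

lemma cross_summable (hpos : ∀ n, 0 < ω n) {a b : ℕ → ℂ} (ha : memH ω a) (hb : memH ω b) :
    Summable fun n => ω n * (‖a n‖ * ‖b n‖) := by
  refine Summable.of_nonneg_of_le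
    (fun n => mul_nonneg (hpos n).le (mul_nonneg (norm_nonneg _) (norm_nonneg _)))
    (fun n => ?_) (ha.add hb)
  have := (hpos n).le
  nlinarith [sq_nonneg (‖a n‖ - ‖b n‖), norm_nonneg (a n), norm_nonneg (b n)]

lemma term_norm (hpos : ∀ n, 0 < ω n) (a b : ℕ → ℂ) (n : ℕ) :
    ‖(ω n : ℂ) * a n * (starRingEnd ℂ) (b n)‖ = ω n * (‖a n‖ * ‖b n‖) := by
  rw [norm_mul, norm_mul, Complex.norm_real, RingHomIsometric.norm_map,
    Real.norm_of_nonneg (hpos n).le, mul_assoc]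

lemma wInner_summable (hpos : ∀ n, 0 < ω n) {a b : ℕ → ℂ} (ha : memH ω a) (hb : memH ω b) :
    Summable fun n => (ω n : ℂ) * a n * (starRingEnd ℂ) (b n) := by
  apply Summable.of_norm
  exact (cross_summable hpos ha hb).congr fun n => (term_norm hpos a b n).symm

lemma wInner_CS (hpos : ∀ n, 0 < ω n) {a b : ℕ → ℂ} (ha : memH ω a) (hb : memH ω b) :
    ‖wInner ω a b‖ ≤ Real.sqrt (wNorm2 ω a) * Real.sqrt (wNorm2 ω b) := by
  have hcross := cross_summable hpos ha hb
  have h1 : ‖wInner ω a b‖ ≤ ∑' n, ω n * (‖a n‖ * ‖b n‖) := by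
    calc ‖wInner ω a b‖ ≤ ∑' n, ‖(ω n : ℂ) * a n * (starRingEnd ℂ) (b n)‖ :=
          norm_tsum_le_tsum_norm (hcross.congr fun n => (term_norm hpos a b n).symm)
      _ = ∑' n, ω n * (‖a n‖ * ‖b n‖) := tsum_congr (term_norm hpos a b)
  refine h1.trans (Summable.tsum_le_of_sum_le hcross fun s => ?_)
  have e : ∀ n, ω n * (‖a n‖ * ‖b n‖)
      = Real.sqrt (ω n * ‖a n‖ ^ 2) * Real.sqrt (ω n * ‖b n‖ ^ 2) := by
    intro n
    rw [← Real.sqrt_mul (mul_nonneg (hpos n).le (sq_nonneg _)),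
      show ω n * ‖a n‖ ^ 2 * (ω n * ‖b n‖ ^ 2) = (ω n * (‖a n‖ * ‖b n‖)) ^ 2 by ring,
      Real.sqrt_sq (mul_nonneg (hpos n).le (mul_nonneg (norm_nonneg _) (norm_nonneg _)))]
  calc ∑ n ∈ s, ω n * (‖a n‖ * ‖b n‖)
      = ∑ n ∈ s, Real.sqrt (ω n * ‖a n‖ ^ 2) * Real.sqrt (ω n * ‖b n‖ ^ 2) :=
        Finset.sum_congr rfl fun n _ => e n
    _ ≤ Real.sqrt (∑ n ∈ s, ω n * ‖a n‖ ^ 2) * Real.sqrt (∑ n ∈ s, ω n * ‖b n‖ ^ 2) :=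
        Real.sum_sqrt_mul_sqrt_le s (fun n => mul_nonneg (hpos n).le (sq_nonneg _))
          (fun n => mul_nonneg (hpos n).le (sq_nonneg _))
    _ ≤ Real.sqrt (wNorm2 ω a) * Real.sqrt (wNorm2 ω b) := by
        apply mul_le_mul
        · exact Real.sqrt_le_sqrt (Summable.sum_le_tsum s
            (fun n _ => mul_nonneg (hpos n).le (sq_nonneg _)) ha)
        · exact Real.sqrt_le_sqrt (Summable.sum_le_tsum s
            (fun n _ => mul_nonneg (hpos n).le (sq_nonneg _)) hb)
        · positivity
        · positivity

lemma wInner_self (a : ℕ → ℂ) : wInner ω a a = (wNorm2 ω a : ℂ) := by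
  rw [wInner, wNorm2, Complex.ofReal_tsum]
  refine tsum_congr fun n => ?_
  rw [mul_assoc, Complex.mul_conj, Complex.normSq_eq_norm_sq]
  push_cast
  ring

lemma wInner_smul (c : ℂ) (a b : ℕ → ℂ) :
    wInner ω (fun n => c * a n) b = c * wInner ω a b := by
  rw [wInner, wInner, ← tsum_mul_left]
  exact tsum_congr fun n => by ring

lemma wInner_finsum {ι : Type*} (s : Finset ι) (g : ι → ℕ → ℂ) (b : ℕ → ℂ)
    (hsum : ∀ i ∈ s, Summable fun n => (ω n : ℂ) * g i n * (starRingEnd ℂ) (b n)) :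
    wInner ω (fun n => ∑ i ∈ s, g i n) b = ∑ i ∈ s, wInner ω (g i) b := by
  rw [wInner]
  rw [tsum_congr (fun n => show (ω n : ℂ) * (∑ i ∈ s, g i n) * (starRingEnd ℂ) (b n)
      = ∑ i ∈ s, (ω n : ℂ) * g i n * (starRingEnd ℂ) (b n) by
    rw [Finset.mul_sum, Finset.sum_mul])]
  exact Summable.tsum_finsetSum hsum

lemma shift_zero (a : ℕ → ℂ) : shift 0 a = a := by
  funext n; simp [shift]

lemma inner_polyMul (hpos : ∀ n, 0 < ω n)
    (hlim : Tendsto (fun n => ω (n + 1) / ω n) atTop (nhds 1))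
    {f : ℕ → ℂ} (hf : memH ω f)
    (hIn : ∀ m : ℕ, 1 ≤ m → wInner ω (shift m f) f = 0) (p : Polynomial ℂ) :
    wInner ω (polyMul p f) f = p.coeff 0 * (wNorm2 ω f : ℂ) := by
  have hrep : polyMul p f = fun n => ∑ j ∈ Finset.range (p.natDegree + 1),
      p.coeff j * shift j f n := funext fun n => polyMul_rep p f n
  rw [hrep, wInner_finsum _ _ _ (fun j _ => ?_)]
  · rw [Finset.sum_congr rfl (g := fun j => p.coeff j * wInner ω (shift j f) f)
      (fun j _ => wInner_smul _ _ _)]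
    rw [Finset.sum_eq_single_of_mem 0 (Finset.mem_range.mpr (by omega))
      (fun j _ hj0 => by rw [hIn j (by omega), mul_zero])]
    rw [shift_zero, wInner_self]
  · exact ((wInner_summable hpos (memH_shift hpos hlim hf j) hf).mul_left
      (p.coeff j)).congr fun n => by ring

lemma norm_expand (c x y : ℂ) :
    ‖x + c * y‖ ^ 2 = ‖x‖ ^ 2 + ‖c‖ ^ 2 * ‖y‖ ^ 2
      + 2 * (c * (y * (starRingEnd ℂ) x)).re := by
  simp only [Complex.sq_norm]
  rw [Complex.normSq_add, Complex.normSq_mul]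
  rw [show x * (starRingEnd ℂ) (c * y) = (starRingEnd ℂ) (c * (y * (starRingEnd ℂ) x)) by
    simp [map_mul]; ring, Complex.conj_re]

lemma summable_re {h : ℕ → ℂ} (hh : Summable h) : Summable fun n => (h n).re :=
  (Complex.hasSum_re hh.hasSum).summable

lemma wNorm2_expand (hpos : ∀ n, 0 < ω n) {f g : ℕ → ℂ} (hf : memH ω f) (hg : memH ω g)
    (c : ℂ) :
    wNorm2 ω (fun n => f n + c * g n)
      = wNorm2 ω f + ‖c‖ ^ 2 * wNorm2 ω g + 2 * (c * wInner ω g f).re := by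
  have hI := wInner_summable hpos hg hf
  have hB : Summable fun n => ‖c‖ ^ 2 * (ω n * ‖g n‖ ^ 2) := hg.mul_left _
  have hCre : Summable fun n =>
      2 * (c * ((ω n : ℂ) * g n * (starRingEnd ℂ) (f n))).re :=
    (summable_re (hI.mul_left c)).mul_left 2
  have key : ∀ n, ω n * ‖f n + c * g n‖ ^ 2
      = ω n * ‖f n‖ ^ 2 + ‖c‖ ^ 2 * (ω n * ‖g n‖ ^ 2)
        + 2 * (c * ((ω n : ℂ) * g n * (starRingEnd ℂ) (f n))).re := by
    intro n
    rw [norm_expand]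
    have h2 : (c * ((ω n : ℂ) * g n * (starRingEnd ℂ) (f n))).re
        = ω n * (c * (g n * (starRingEnd ℂ) (f n))).re := by
      rw [show c * ((ω n : ℂ) * g n * (starRingEnd ℂ) (f n))
          = (ω n : ℂ) * (c * (g n * (starRingEnd ℂ) (f n))) by ring,
        Complex.re_ofReal_mul]
    rw [h2]; ring
  rw [wNorm2, tsum_congr key, Summable.tsum_add (hf.add hB) hCre, Summable.tsum_add hf hB, tsum_mul_left,
    tsum_mul_left]
  rw [← Complex.re_tsum (hI.mul_left c), tsum_mul_left]
  rfl

lemma polyMul_special (c : ℂ) {m : ℕ} (hm : 1 ≤ m) (f : ℕ → ℂ) :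
    polyMul (Polynomial.C 1 + Polynomial.C c * Polynomial.X ^ m) f
      = fun n => f n + c * shift m f n := by
  funext n
  rw [polyMul]
  have hco : ∀ j, (Polynomial.C 1 + Polynomial.C c * Polynomial.X ^ m).coeff j
      = (if j = 0 then 1 else 0) + c * (if j = m then 1 else 0) := by
    intro j
    simp [Polynomial.coeff_add, Polynomial.coeff_C, Polynomial.coeff_C_mul,
      Polynomial.coeff_X_pow, Polynomial.coeff_one]
  rw [Finset.sum_congr rfl
    (g := fun j => (if j = 0 then f (n - j) else 0) + (if j = m then c * f (n - j) else 0))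
    (fun j _ => by rw [hco j]; split_ifs <;> simp_all <;> ring)]
  rw [Finset.sum_add_distrib, Finset.sum_ite_eq' _ 0 (fun j => f (n - j)),
    Finset.sum_ite_eq' _ m (fun j => c * f (n - j))]
  simp only [Finset.mem_range, Nat.lt_succ_iff, Nat.zero_le, if_true, Nat.sub_zero, shift]
  split_ifs <;> simp

lemma eval_special (c : ℂ) {m : ℕ} (hm : 1 ≤ m) :
    (Polynomial.C 1 + Polynomial.C c * Polynomial.X ^ m).eval 0 = 1 := by
  simp [zero_pow (by omega : m ≠ 0)]

lemma backward_inner (hpos : ∀ n, 0 < ω n)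
    (hlim : Tendsto (fun n => ω (n + 1) / ω n) atTop (nhds 1))
    {f : ℕ → ℂ} (hf : memH ω f) (h1 : wNorm2 ω f = 1)
    (h2 : ∀ p : Polynomial ℂ, ‖p.eval 0‖ ≤ Real.sqrt (wNorm2 ω (polyMul p f)))
    (m : ℕ) (hm : 1 ≤ m) : wInner ω (shift m f) f = 0 := by
  set g := shift m f with hgdef
  have hg : memH ω g := memH_shift hpos hlim hf m
  set I := wInner ω g f with hIdef
  set N := wNorm2 ω g with hNdef
  have hN0 : 0 ≤ N := tsum_nonneg fun n => mul_nonneg (hpos n).le (sq_nonneg _)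
  have key : ∀ c : ℂ, 0 ≤ ‖c‖ ^ 2 * N + 2 * (c * I).re := by
    intro c
    have h3 := h2 (Polynomial.C 1 + Polynomial.C c * Polynomial.X ^ m)
    rw [eval_special c hm, polyMul_special c hm f, wNorm2_expand hpos hf hg c, h1] at h3
    rw [norm_one] at h3
    set X : ℝ := 1 + ‖c‖ ^ 2 * N + 2 * (c * I).re with hX
    have hXnn : 0 ≤ X := by
      by_contra hneg
      rw [Real.sqrt_eq_zero'.mpr (le_of_not_ge hneg)] at h3
      linarith
    nlinarith [Real.sq_sqrt hXnn, Real.sqrt_nonneg X]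
  have hns : Complex.normSq I = ‖I‖ ^ 2 := by
    rw [Complex.normSq_eq_norm_sq]
  set t : ℝ := (N + 1)⁻¹ with htdef
  have ht : 0 < t := by positivity
  have htN : t * (N + 1) = 1 := inv_mul_cancel₀ (by positivity)
  have hc := key ((-t : ℝ) * (starRingEnd ℂ) I)
  have e1 : (((-t : ℝ) : ℂ) * (starRingEnd ℂ) I * I) = ((-(t * ‖I‖ ^ 2) : ℝ) : ℂ) := by
    rw [show ((-t : ℝ) : ℂ) * (starRingEnd ℂ) I * I
        = ((-t : ℝ) : ℂ) * (I * (starRingEnd ℂ) I) by ring, Complex.mul_conj, hns]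
    push_cast
    ring
  have e2 : ‖((-t : ℝ) : ℂ) * (starRingEnd ℂ) I‖ ^ 2 = t ^ 2 * ‖I‖ ^ 2 := by
    rw [norm_mul, mul_pow, RingHomIsometric.norm_map, Complex.norm_real,
      Real.norm_eq_abs, _root_.sq_abs]
    ring
  rw [e1, e2, Complex.ofReal_re] at hc
  have hs : ‖I‖ ^ 2 = 0 := by nlinarith [sq_nonneg ‖I‖, mul_pos ht ht]
  have : ‖I‖ = 0 := by
    have := sq_nonneg ‖I‖
    nlinarith [norm_nonneg I]
  exact norm_eq_zero.mp this

end Aux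




/-- `f ∈ H²_ω` is inner iff `‖f‖ = 1` and `|p(0)| ≤ ‖p·f‖` for every
polynomial `p`. -/
theorem stmt7 (ω : ℕ → ℝ) (hpos : ∀ n, 0 < ω n) (hω0 : ω 0 = 1)
    (hlim : Filter.Tendsto (fun n => ω (n + 1) / ω n) Filter.atTop (nhds 1))
    (f : ℕ → ℂ) (hf : WHS.memH ω f) :
    WHS.IsInner ω f ↔
      (WHS.wNorm2 ω f = 1 ∧ ∀ p : Polynomial ℂ,
        ‖p.eval 0‖ ≤ Real.sqrt (WHS.wNorm2 ω (WHS.polyMul p f))) := by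
  constructor
  · rintro ⟨hmem, h1, hIn⟩
    refine ⟨h1, fun p => ?_⟩
    have hCS := wInner_CS hpos (memH_polyMul hpos hlim hf p) hf
    rw [inner_polyMul hpos hlim hf hIn p, h1] at hCS
    rw [← Polynomial.coeff_zero_eq_eval_zero]
    simpa using hCS
  · rintro ⟨h1, h2⟩
    exact ⟨hf, h1, fun m hm => backward_inner hpos hlim hf h1 h2 m hm⟩
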